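/- Let K ⊂ ℝ^{2n} be a compact convex polytope containing 0 in its interior, with (2n−1)-dimensional facets F_1,…,F_m, unit outer normals n_i, heights h_i = h_K(n_i), and associated vectors p_i = (2/h_i) J n_i. Let c > 0 be a constant and let z ∈ H¹([0,1],ℝ^{2n}) be such that for almost every t there are indices j_1,…,j_l with F_{j_1} ∩ … ∩ F_{j_l} ≠ ∅ and ż(t) ∈ c · conv{p_{j_1},…,p_{j_l}}. Then ∫₀¹ H_K*(−Jż(t)) dt = c². -/
import Mathlib


open MeasureTheory Set Pointwise

noncomputable section

/-- ℝ^{2n} modeled as functions `Fin (2*n) → ℝ`. -/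
abbrev E2 (n : ℕ) : Type := Fin (2 * n) → ℝ

/-- The standard inner product on `ℝ^{2n}`. -/
def ip {n : ℕ} (x y : E2 n) : ℝ := ∑ i, x i * y i

/-- The standard complex structure `J = [[0, -Iₙ],[Iₙ, 0]]`. -/
def Jmap {n : ℕ} (x : E2 n) : E2 n := fun i =>
  if h : (i : ℕ) < n then -x ⟨(i : ℕ) + n, by omega⟩
  else x ⟨(i : ℕ) - n, by have := i.isLt; omega⟩

/-- The standard symplectic form `ω₀(u,v) = ⟨Ju, v⟩`. -/
def omega0 {n : ℕ} (u v : E2 n) : ℝ := ip (Jmap u) v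

/-- The Legendre transform `H_K*(w) = sup_ξ (⟨w,ξ⟩ - H_K(ξ))` of the square
`H_K = (gauge K)²` of the Minkowski functional of `K`. -/
def HKstar {n : ℕ} (K : Set (E2 n)) (w : E2 n) : ℝ :=
  sSup {r : ℝ | ∃ ξ : E2 n, r = ip w ξ - (gauge K ξ) ^ 2}

lemma ip_comm {n : ℕ} (x y : E2 n) : ip x y = ip y x := by
  simp [ip, mul_comm]

lemma ip_smul_left {n : ℕ} (a : ℝ) (x y : E2 n) : ip (a • x) y = a * ip x y := by
  simp [ip, Finset.mul_sum, mul_assoc]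

lemma ip_smul_right {n : ℕ} (a : ℝ) (x y : E2 n) : ip x (a • y) = a * ip x y := by
  rw [ip_comm, ip_smul_left, ip_comm]

lemma ip_neg_left {n : ℕ} (x y : E2 n) : ip (-x) y = -ip x y := by
  simp [ip, Finset.sum_neg_distrib]

lemma ip_add_left {n : ℕ} (x y z : E2 n) : ip (x + y) z = ip x z + ip y z := by
  simp [ip, add_mul, Finset.sum_add_distrib]

lemma Jmap_add {n : ℕ} (x y : E2 n) : Jmap (x + y) = Jmap x + Jmap y := by
  funext i; simp only [Jmap, Pi.add_apply]; split_ifs <;> ring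

lemma Jmap_smul {n : ℕ} (a : ℝ) (x : E2 n) : Jmap (a • x) = a • Jmap x := by
  funext i; simp only [Jmap, Pi.smul_apply, smul_eq_mul]; split_ifs <;> ring

lemma Jmap_Jmap {n : ℕ} (x : E2 n) : Jmap (Jmap x) = -x := by
  funext i
  simp only [Jmap, Pi.neg_apply]
  by_cases hi : (i : ℕ) < n
  · rw [dif_pos hi, dif_neg (by omega : ¬ ((i : ℕ) + n < n))]
    have : (⟨(i : ℕ) + n - n, by omega⟩ : Fin (2 * n)) = i := by
      apply Fin.ext; simp
    rw [this]
  · have hi2 : ((i : ℕ) - n) < n := by have := i.isLt; omega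
    rw [dif_neg hi, dif_pos hi2]
    have : (⟨(i : ℕ) - n + n, by omega⟩ : Fin (2 * n)) = i := by
      apply Fin.ext; simp; omega
    rw [this]


/-- Proposition 3.5: for a convex polytope `K = {x | ⟨x, nᵢ⟩ ≤ hᵢ}`
with `0 ∈ Int K`, facets `Fᵢ = K ∩ {⟨x, nᵢ⟩ = hᵢ}` and `pᵢ = (2/hᵢ) J nᵢ`, if
`z ∈ H¹([0,1],ℝ^{2n})` is such that for a.e. `t` there is a nonempty face
`F_{j₁} ∩ … ∩ F_{j_l} ≠ ∅` with `ż(t) ∈ c·conv{p_{j₁},…,p_{j_l}}`, then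
`∫₀¹ H_K*(-Jż(t)) dt = c²`. -/
theorem integral_HKstar_on_polytope
    (n m : ℕ)
    (K : Set (E2 n)) (nv : Fin m → E2 n) (h : Fin m → ℝ)
    (hKcomp : IsCompact K)
    (hKdef : K = {x : E2 n | ∀ i, ip x (nv i) ≤ h i})
    (hunit : ∀ i, ip (nv i) (nv i) = 1)
    (hfacet : ∀ i, ∃ x ∈ K, ip x (nv i) = h i ∧ ∀ j, j ≠ i → ip x (nv j) < h j)
    (h0 : (0 : E2 n) ∈ interior K)
    (c : ℝ) (hc : 0 < c)
    (z dz : ℝ → E2 n)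
    (hint : IntervalIntegrable dz volume 0 1)
    (hz : ∀ t ∈ Set.Icc (0:ℝ) 1, z t = z 0 + ∫ s in (0:ℝ)..t, dz s)
    (hae : ∀ᵐ t ∂(volume : Measure ℝ), t ∈ Set.Ioo (0:ℝ) 1 →
      ∃ S : Finset (Fin m), S.Nonempty ∧
        (K ∩ ⋂ j ∈ S, {x : E2 n | ip x (nv j) = h j}).Nonempty ∧
        dz t ∈ c • convexHull ℝ ((fun j => (2 / h j) • Jmap (nv j)) '' (S : Set (Fin m)))) :
    ∫ t in (0:ℝ)..1, HKstar K (-(Jmap (dz t))) = c ^ 2 := by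
  -- heights are positive
  have habs : Absorbent ℝ K := absorbent_nhds_zero (mem_interior_iff_mem_nhds.mp h0)
  have hpos : ∀ j, 0 < h j := by
    intro j
    obtain ⟨ε, hε, hball⟩ := Metric.mem_nhds_iff.mp (mem_interior_iff_mem_nhds.mp h0)
    have hnorm : ‖nv j‖ ≤ 1 := by
      rw [pi_norm_le_iff_of_nonneg zero_le_one]
      intro i
      rw [Real.norm_eq_abs, abs_le_one_iff_mul_self_le_one]
      calc nv j i * nv j i ≤ ∑ k, nv j k * nv j k :=
            Finset.single_le_sum (f := fun k => nv j k * nv j k)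
              (fun k _ => mul_self_nonneg _) (Finset.mem_univ i)
        _ = 1 := hunit j
    have hmem : (ε / 2) • nv j ∈ K := by
      apply hball
      rw [Metric.mem_ball, dist_zero_right, norm_smul, Real.norm_eq_abs,
        abs_of_pos (by linarith : (0:ℝ) < ε / 2)]
      nlinarith
    have := (hKdef ▸ hmem) j
    rw [ip_smul_left, hunit j, mul_one] at this
    linarith
  -- the a.e. pointwise identity
  have h1 : ∀ᵐ t : ℝ ∂(volume : Measure ℝ), t ≠ (1:ℝ) := by
    rw [ae_iff]
    have : {t : ℝ | ¬ t ≠ (1:ℝ)} = {(1:ℝ)} := by ext t; simp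
    rw [this]
    exact Real.volume_singleton
  have key : ∀ᵐ t ∂(volume : Measure ℝ), t ∈ Set.uIoc (0:ℝ) 1 →
      HKstar K (-(Jmap (dz t))) = c ^ 2 := by
    filter_upwards [hae, h1] with t ht hne htmem
    rw [Set.uIoc_of_le zero_le_one] at htmem
    obtain ⟨S, hSne, ⟨x₀, hx₀K, hx₀F⟩, hdz⟩ := ht ⟨htmem.1, lt_of_le_of_ne htmem.2 hne⟩
    obtain ⟨v, hv, hdzv⟩ := Set.mem_smul_set.mp hdz
    -- linear functional facts
    have islin : ∀ x : E2 n, IsLinearMap ℝ (fun u : E2 n => ip (Jmap u) x) := by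
      intro x
      exact ⟨fun u w => by rw [Jmap_add, ip_add_left],
             fun a u => by rw [Jmap_smul, ip_smul_left]; rfl⟩
    have hPval : ∀ x : E2 n, ∀ j : Fin m,
        ip (Jmap ((2 / h j) • Jmap (nv j))) x = -((2 / h j) * ip (nv j) x) := by
      intro x j
      rw [Jmap_smul, ip_smul_left, Jmap_Jmap, ip_neg_left]
      ring
    -- upper bound on K
    have hwK : ∀ x ∈ K, ip (-(Jmap (dz t))) x ≤ 2 * c := by
      intro x hx
      have hhull : convexHull ℝ ((fun j => (2 / h j) • Jmap (nv j)) '' (S : Set (Fin m)))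
          ⊆ {u : E2 n | -2 ≤ ip (Jmap u) x} := by
        apply convexHull_min _ (convex_halfSpace_ge (islin x) (-2))
        rintro p ⟨j, hj, rfl⟩
        simp only [Set.mem_setOf_eq, hPval x j]
        have hxj : ip x (nv j) ≤ h j := (hKdef ▸ hx) j
        have : (2 / h j) * ip (nv j) x ≤ 2 := by
          rw [ip_comm]
          calc (2 / h j) * ip x (nv j) ≤ (2 / h j) * h j := by
                exact mul_le_mul_of_nonneg_left hxj
                  (div_nonneg (by norm_num) (hpos j).le)
            _ = 2 := div_mul_cancel₀ 2 (hpos j).ne'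
        linarith
      have hfv : -2 ≤ ip (Jmap v) x := hhull hv
      rw [← hdzv, Jmap_smul, ← neg_smul, ip_smul_left]
      nlinarith
    -- equality at x₀
    have hwx₀ : ip (-(Jmap (dz t))) x₀ = 2 * c := by
      have hhull : convexHull ℝ ((fun j => (2 / h j) • Jmap (nv j)) '' (S : Set (Fin m)))
          ⊆ {u : E2 n | ip (Jmap u) x₀ = -2} := by
        apply convexHull_min _ (convex_hyperplane (islin x₀) (-2))
        rintro p ⟨j, hj, rfl⟩
        simp only [Set.mem_setOf_eq, hPval x₀ j]
        have hxj : ip x₀ (nv j) = h j := Set.mem_iInter₂.mp hx₀F j hj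
        rw [ip_comm, hxj, div_mul_cancel₀ 2 (hpos j).ne']
      have hfv : ip (Jmap v) x₀ = -2 := hhull hv
      rw [← hdzv, Jmap_smul, ← neg_smul, ip_smul_left, hfv]
      ring
    -- gauge bound
    have hb : ∀ ξ : E2 n, ip (-(Jmap (dz t))) ξ ≤ 2 * c * gauge K ξ := by
      intro ξ
      have h2c : (0:ℝ) < 2 * c := by linarith
      have hle : ip (-(Jmap (dz t))) ξ / (2 * c) ≤ gauge K ξ := by
        apply le_csInf habs.gauge_set_nonempty
        rintro r ⟨hr, hξ⟩
        obtain ⟨x, hxK, rfl⟩ := Set.mem_smul_set.mp hξ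
        rw [div_le_iff₀ h2c, ip_smul_right]
        have := hwK x hxK
        nlinarith
      rw [div_le_iff₀ h2c] at hle
      linarith
    -- gauge K x₀ = 1
    have hg₀ : gauge K x₀ = 1 := by
      have hle1 : gauge K x₀ ≤ 1 := gauge_le_one_of_mem hx₀K
      have := hb x₀
      rw [hwx₀] at this
      nlinarith
    -- compute sSup
    have hbdd : ∀ r ∈ {r : ℝ | ∃ ξ : E2 n, r = ip (-(Jmap (dz t))) ξ - (gauge K ξ) ^ 2},
        r ≤ c ^ 2 := by
      rintro r ⟨ξ, rfl⟩
      have h1 := hb ξ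
      have h2 := gauge_nonneg (s := K) (x := ξ)
      nlinarith [sq_nonneg (c - gauge K ξ)]
    have hmem : c ^ 2 ∈ {r : ℝ | ∃ ξ : E2 n, r = ip (-(Jmap (dz t))) ξ - (gauge K ξ) ^ 2} := by
      refine ⟨c • x₀, ?_⟩
      rw [ip_smul_right, hwx₀, gauge_smul_of_nonneg hc.le, smul_eq_mul, hg₀]
      ring
    unfold HKstar
    exact le_antisymm (csSup_le ⟨c ^ 2, hmem⟩ hbdd) (le_csSup ⟨c ^ 2, hbdd⟩ hmem)
  rw [intervalIntegral.integral_congr_ae key]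
  simp
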